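/- Let L > 0 and let α : ℝ → ℝ be continuously differentiable on [0, L], and suppose that the set {y ∈ [0, L] : α'(y) = 0} is finite. Then ∫_{0}^{2π} N(θ) dθ = ∫_{0}^{L} |α'(y)| dy, where for θ ∈ [0, 2π), N(θ) denotes the (finite) number of points y ∈ [0, L] such that α(y) ≡ θ (mod 2π), i.e., α(y) = θ + 2πk for some integer k. Equivalently, for θ chosen uniformly at random from [0, 2π), the expected number of points y ∈ [0, L] with α(y) ≡ θ (mod 2π) equals (1/2π)∫_{0}^{L} |α'(y)| dy. -/

import Mathlib

open MeasureTheory Set Real intervalIntegral ENNReal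

lemma periodization (s : Set ℝ) (hs : MeasurableSet s) :
    ∫⁻ θ in Set.Ioc (0:ℝ) (2*π), ∑' k : ℤ, s.indicator (fun _ => (1:ℝ≥0∞)) (θ + 2*π*k)
      = volume s := by
  have hT : (0:ℝ) < 2*π := by positivity
  have hpre : ∀ c : ℝ, (fun θ : ℝ => s.indicator (fun _ => (1:ℝ≥0∞)) (θ + c))
      = ((fun θ : ℝ => θ + c) ⁻¹' s).indicator (fun _ => (1:ℝ≥0∞)) := by
    intro c; ext θ; by_cases h : θ + c ∈ s <;> simp [Set.indicator, h]
  have hmeas : ∀ c : ℝ, MeasurableSet ((fun θ : ℝ => θ + c) ⁻¹' s) :=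
    fun c => hs.preimage (measurable_add_const c)
  rw [lintegral_tsum (fun k => ((hpre (2*π*k) ▸
    ((measurable_one.indicator (hmeas (2*π*k))))) : Measurable _).aemeasurable)]
  have hterm : ∀ k : ℤ, ∫⁻ θ in Set.Ioc (0:ℝ) (2*π),
      s.indicator (fun _ => (1:ℝ≥0∞)) (θ + 2*π*k)
      = volume (s ∩ Set.Ioc (k • (2*π)) ((k+1) • (2*π))) := by
    intro k
    rw [hpre (2*π*k), lintegral_indicator_const (hmeas (2*π*k)), one_mul,
      Measure.restrict_apply (hmeas (2*π*k))]
    have : (fun θ : ℝ => θ + 2*π*k) ⁻¹' s ∩ Set.Ioc 0 (2*π)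
        = (fun θ : ℝ => θ + 2*π*k) ⁻¹' (s ∩ Set.Ioc (k • (2*π)) ((k+1) • (2*π))) := by
      rw [Set.preimage_inter]
      congr 1
      ext θ
      simp only [Set.mem_Ioc, Set.mem_preimage, zsmul_eq_mul]
      constructor
      · rintro ⟨h1, h2⟩; constructor <;> push_cast <;> nlinarith
      · rintro ⟨h1, h2⟩; constructor <;> push_cast at h1 h2 <;> nlinarith
    rw [this, measure_preimage_add_right]
  simp_rw [hterm]
  rw [← measure_iUnion ?_ (fun k => hs.inter measurableSet_Ioc)]
  · rw [← Set.inter_iUnion, iUnion_Ioc_zsmul hT, Set.inter_univ]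
  · intro i j hij
    refine Set.disjoint_left.mpr fun x hxi hxj => ?_
    simp only [Set.mem_inter_iff, Set.mem_Ioc, zsmul_eq_mul] at hxi hxj
    push_cast at hxi hxj
    rcases lt_or_gt_of_ne hij with h | h
    · have : (i:ℝ) + 1 ≤ j := by exact_mod_cast h
      nlinarith [hxi.2.2, hxj.2.1, hT]
    · have : (j:ℝ) + 1 ≤ i := by exact_mod_cast h
      nlinarith [hxj.2.2, hxi.2.1, hT]

lemma lattice_finite {s : Set ℝ} {c d : ℝ} (hsub : s ⊆ Set.Icc c d) (θ : ℝ) :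
    {k : ℤ | θ + 2*π*k ∈ s}.Finite := by
  have hT : (0:ℝ) < 2*π := by positivity
  apply Set.Finite.subset (Set.finite_Icc ⌈(c-θ)/(2*π)⌉ ⌊(d-θ)/(2*π)⌋)
  intro k hk
  obtain ⟨h1, h2⟩ := hsub hk
  constructor
  · rw [Int.ceil_le]; rw [div_le_iff₀ hT]; linarith
  · rw [Int.le_floor]; rw [le_div_iff₀ hT]; linarith

lemma count_eq_tsum (s : Set ℝ) (θ : ℝ) (hfin : {k : ℤ | θ + 2*π*k ∈ s}.Finite) :
    (({k : ℤ | θ + 2*π*k ∈ s}.ncard : ℝ≥0∞))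
      = ∑' k : ℤ, s.indicator (fun _ => (1:ℝ≥0∞)) (θ + 2*π*k) := by
  set t := {k : ℤ | θ + 2*π*k ∈ s} with ht
  have : (fun k : ℤ => s.indicator (fun _ => (1:ℝ≥0∞)) (θ + 2*π*k))
      = t.indicator (fun _ => (1:ℝ≥0∞)) := by
    ext k; by_cases h : k ∈ t <;> simp [Set.indicator, ht, h] <;> simp [ht] at h <;> simp [h] <;> exact h
  rw [this, ← tsum_subtype t (fun _ => (1:ℝ≥0∞)), ENNReal.tsum_set_one,
    hfin.encard_eq_coe_toFinset_card, ← Set.ncard_eq_toFinset_card _ hfin]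
  simp

lemma piece_core (α : ℝ → ℝ) (a b c d : ℝ) (s : Set ℝ) (hs : MeasurableSet s)
    (hsub : s ⊆ Set.Icc c d) (himg : α '' Set.Ioc a b = s)
    (hinj : Set.InjOn α (Set.Ioc a b)) :
    (∀ θ : ℝ, {y ∈ Set.Ioc a b | ∃ k : ℤ, α y = θ + 2*π*k}.Finite) ∧
    Measurable (fun θ : ℝ =>
      (({y ∈ Set.Ioc a b | ∃ k : ℤ, α y = θ + 2*π*k}).ncard : ℝ≥0∞)) ∧
    ∫⁻ θ in Set.Ioc (0:ℝ) (2*π),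
      (({y ∈ Set.Ioc a b | ∃ k : ℤ, α y = θ + 2*π*k}).ncard : ℝ≥0∞) = volume s := by
  have hT : (0:ℝ) < 2*π := by positivity
  have key : ∀ θ : ℝ, {y ∈ Set.Ioc a b | ∃ k : ℤ, α y = θ + 2*π*k}.Finite ∧
      ({y ∈ Set.Ioc a b | ∃ k : ℤ, α y = θ + 2*π*k}).ncard
        = ({k : ℤ | θ + 2*π*k ∈ s}).ncard := by
    intro θ
    set A := {y ∈ Set.Ioc a b | ∃ k : ℤ, α y = θ + 2*π*k} with hA
    set t := {k : ℤ | θ + 2*π*k ∈ s} with htdef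
    have hinjk : Function.Injective (fun k : ℤ => θ + 2*π*k) := by
      intro k l h
      simp only at h
      have : (k:ℝ) = l := by
        have h2 : 2*π*(k:ℝ) = 2*π*l := by linarith
        exact mul_left_cancel₀ (ne_of_gt hT) h2
      exact_mod_cast this
    have hAsub : A ⊆ Set.Ioc a b := fun y hy => hy.1
    have hinjA : Set.InjOn α A := hinj.mono hAsub
    have himgA : α '' A = (fun k : ℤ => θ + 2*π*k) '' t := by
      ext x
      constructor
      · rintro ⟨y, ⟨hy, k, hk⟩, rfl⟩
        exact ⟨k, by rw [htdef, Set.mem_setOf_eq, ← hk, ← himg]; exact ⟨y, hy, rfl⟩, hk.symm⟩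
      · rintro ⟨k, hk, rfl⟩
        rw [htdef, Set.mem_setOf_eq, ← himg] at hk
        obtain ⟨y, hy, hxy⟩ := hk
        exact ⟨y, ⟨hy, k, hxy⟩, hxy⟩
    have htfin : t.Finite := lattice_finite hsub θ
    have himgfin : (α '' A).Finite := by rw [himgA]; exact htfin.image _
    have hAfin : A.Finite := Set.Finite.of_finite_image himgfin hinjA
    refine ⟨hAfin, ?_⟩
    rw [← Set.ncard_image_of_injOn hinjA, himgA, Set.ncard_image_of_injective _ hinjk]
  have hrw : (fun θ : ℝ =>
      (({y ∈ Set.Ioc a b | ∃ k : ℤ, α y = θ + 2*π*k}).ncard : ℝ≥0∞))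
      = fun θ : ℝ => ∑' k : ℤ, s.indicator (fun _ => (1:ℝ≥0∞)) (θ + 2*π*k) := by
    funext θ
    rw [(key θ).2, count_eq_tsum s θ (lattice_finite hsub θ)]
  refine ⟨fun θ => (key θ).1, ?_, ?_⟩
  · rw [hrw]
    apply Measurable.ennreal_tsum
    intro k
    have : (fun θ : ℝ => s.indicator (fun _ => (1:ℝ≥0∞)) (θ + 2*π*k))
        = ((fun θ : ℝ => θ + 2*π*k) ⁻¹' s).indicator (fun _ => (1:ℝ≥0∞)) := by
      ext θ; by_cases h : θ + 2*π*k ∈ s <;> simp [Set.indicator, h]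
    rw [this]
    exact measurable_one.indicator (hs.preimage (measurable_add_const _))
  · rw [hrw]
    exact periodization s hs

lemma piece (α α' : ℝ → ℝ) (a b : ℝ) (hab : a ≤ b)
    (hd : ∀ y ∈ Set.Icc a b, HasDerivAt α (α' y) y)
    (hc : ContinuousOn α' (Set.Icc a b))
    (hne : ∀ y ∈ Set.Ioo a b, α' y ≠ 0) :
    (∀ θ : ℝ, {y ∈ Set.Ioc a b | ∃ k : ℤ, α y = θ + 2*π*k}.Finite) ∧
    Measurable (fun θ : ℝ =>
      (({y ∈ Set.Ioc a b | ∃ k : ℤ, α y = θ + 2*π*k}).ncard : ℝ≥0∞)) ∧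
    ∫⁻ θ in Set.Ioc (0:ℝ) (2*π),
      (({y ∈ Set.Ioc a b | ∃ k : ℤ, α y = θ + 2*π*k}).ncard : ℝ≥0∞)
      = ENNReal.ofReal (∫ y in a..b, |α' y|) := by
  rcases eq_or_lt_of_le hab with rfl | hlt
  · have hempty : ∀ θ : ℝ, {y ∈ Set.Ioc a a | ∃ k : ℤ, α y = θ + 2*π*k} = ∅ := by
      intro θ; simp [Set.Ioc_self]
    refine ⟨fun θ => by rw [hempty θ]; exact Set.finite_empty, ?_, ?_⟩
    · simp_rw [hempty]; simp
    · simp_rw [hempty]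
      simp [intervalIntegral.integral_same]
  · -- a < b
    have hca : ContinuousOn α (Set.Icc a b) :=
      fun y hy => (hd y hy).continuousAt.continuousWithinAt
    have hInt : IntervalIntegrable α' volume a b := by
      apply ContinuousOn.intervalIntegrable
      rwa [Set.uIcc_of_le hab]
    have hftc : ∫ y in a..b, α' y = α b - α a := by
      apply intervalIntegral.integral_eq_sub_of_hasDerivAt
      · intro y hy; exact hd y (by rwa [Set.uIcc_of_le hab] at hy)
      · exact hInt
    have haeb : ∀ᵐ x : ℝ ∂volume, x ≠ b := by
      have : volume ({b} : Set ℝ) = 0 := Real.volume_singleton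
      rw [MeasureTheory.ae_iff]
      simpa using this
    -- sign dichotomy
    have hsign : (∀ y ∈ Set.Ioo a b, 0 < α' y) ∨ (∀ y ∈ Set.Ioo a b, α' y < 0) := by
      by_contra hcon
      push_neg at hcon
      obtain ⟨⟨y1, hy1, h1⟩, ⟨y2, hy2, h2⟩⟩ := hcon
      have h1' : α' y1 < 0 := lt_of_le_of_ne h1 (hne y1 hy1)
      have h2' : 0 < α' y2 := lt_of_le_of_ne h2 (Ne.symm (hne y2 hy2))
      have hsubIoo : Set.uIcc y1 y2 ⊆ Set.Ioo a b := by
        rw [Set.uIcc_eq_union]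
        apply Set.union_subset <;> intro z hz
        · exact ⟨lt_of_lt_of_le hy1.1 hz.1, lt_of_le_of_lt hz.2 hy2.2⟩
        · exact ⟨lt_of_lt_of_le hy2.1 hz.1, lt_of_le_of_lt hz.2 hy1.2⟩
      have hcu : ContinuousOn α' (Set.uIcc y1 y2) :=
        hc.mono (hsubIoo.trans Set.Ioo_subset_Icc_self)
      have h0 : (0:ℝ) ∈ Set.uIcc (α' y1) (α' y2) :=
        Set.mem_uIcc.mpr (Or.inl ⟨le_of_lt h1', le_of_lt h2'⟩)
      obtain ⟨z, hz, hz0⟩ := intermediate_value_uIcc hcu h0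
      exact hne z (hsubIoo hz) hz0
    rcases hsign with hpos | hneg
    · -- increasing
      have hmono : StrictMonoOn α (Set.Icc a b) := by
        apply strictMonoOn_of_deriv_pos (convex_Icc a b) hca
        intro x hx
        rw [interior_Icc] at hx
        rw [(hd x (Set.Ioo_subset_Icc_self hx)).deriv]
        exact hpos x hx
      have himg : α '' Set.Ioc a b = Set.Ioc (α a) (α b) := by
        apply Set.Subset.antisymm
        · rintro x ⟨y, hy, rfl⟩
          exact ⟨hmono ⟨le_refl a, hab⟩ ⟨le_of_lt hy.1, hy.2⟩ hy.1,
            hmono.monotoneOn ⟨le_of_lt hy.1, hy.2⟩ ⟨hab, le_refl b⟩ hy.2⟩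
        · exact intermediate_value_Ioc hab hca
      have habs : ∫ y in a..b, |α' y| = α b - α a := by
        rw [← hftc]
        apply intervalIntegral.integral_congr_ae
        filter_upwards [haeb] with x hxb hx
        rw [Set.uIoc_of_le hab] at hx
        exact abs_of_pos (hpos x ⟨hx.1, lt_of_le_of_ne hx.2 hxb⟩)
      have := piece_core α a b (α a) (α b) (Set.Ioc (α a) (α b)) measurableSet_Ioc
        Set.Ioc_subset_Icc_self himg (hmono.injOn.mono Set.Ioc_subset_Icc_self)
      rw [Real.volume_Ioc] at this
      rw [habs]
      exact this
    · -- decreasing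
      have hanti : StrictAntiOn α (Set.Icc a b) := by
        apply strictAntiOn_of_deriv_neg (convex_Icc a b) hca
        intro x hx
        rw [interior_Icc] at hx
        rw [(hd x (Set.Ioo_subset_Icc_self hx)).deriv]
        exact hneg x hx
      have himg : α '' Set.Ioc a b = Set.Ico (α b) (α a) := by
        apply Set.Subset.antisymm
        · rintro x ⟨y, hy, rfl⟩
          exact ⟨hanti.antitoneOn ⟨le_of_lt hy.1, hy.2⟩ ⟨hab, le_refl b⟩ hy.2,
            hanti ⟨le_refl a, hab⟩ ⟨le_of_lt hy.1, hy.2⟩ hy.1⟩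
        · exact intermediate_value_Ioc' hab hca
      have habs : ∫ y in a..b, |α' y| = α a - α b := by
        have hneg' : ∫ y in a..b, -α' y = -(α b - α a) := by
          rw [intervalIntegral.integral_neg, hftc]
        rw [← neg_sub (α b) (α a), ← hneg']
        apply intervalIntegral.integral_congr_ae
        filter_upwards [haeb] with x hxb hx
        rw [Set.uIoc_of_le hab] at hx
        exact abs_of_neg (hneg x ⟨hx.1, lt_of_le_of_ne hx.2 hxb⟩)
      have := piece_core α a b (α b) (α a) (Set.Ico (α b) (α a)) measurableSet_Ico
        Set.Ico_subset_Icc_self himg (hanti.injOn.mono Set.Ioc_subset_Icc_self)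
      rw [Real.volume_Ico] at this
      rw [habs]
      exact this

lemma pieces (α α' : ℝ → ℝ) (n : ℕ) : ∀ (a b : ℝ), a ≤ b →
    (∀ y ∈ Set.Icc a b, HasDerivAt α (α' y) y) →
    ContinuousOn α' (Set.Icc a b) →
    {y ∈ Set.Ioo a b | α' y = 0}.Finite →
    {y ∈ Set.Ioo a b | α' y = 0}.ncard ≤ n →
    (∀ θ : ℝ, {y ∈ Set.Ioc a b | ∃ k : ℤ, α y = θ + 2*π*k}.Finite) ∧
    Measurable (fun θ : ℝ =>
      (({y ∈ Set.Ioc a b | ∃ k : ℤ, α y = θ + 2*π*k}).ncard : ℝ≥0∞)) ∧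
    ∫⁻ θ in Set.Ioc (0:ℝ) (2*π),
      (({y ∈ Set.Ioc a b | ∃ k : ℤ, α y = θ + 2*π*k}).ncard : ℝ≥0∞)
      = ENNReal.ofReal (∫ y in a..b, |α' y|) := by
  induction n with
  | zero =>
    intro a b hab hd hc hfin hcard
    have hE : {y ∈ Set.Ioo a b | α' y = 0} = ∅ := by
      rw [← Set.ncard_eq_zero hfin]; omega
    refine piece α α' a b hab hd hc fun y hy hy0 => ?_
    have : y ∈ {y ∈ Set.Ioo a b | α' y = 0} := ⟨hy, hy0⟩
    rw [hE] at this; exact this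
  | succ n ih =>
    intro a b hab hd hc hfin hcard
    by_cases hE : {y ∈ Set.Ioo a b | α' y = 0} = ∅
    · refine piece α α' a b hab hd hc fun y hy hy0 => ?_
      have : y ∈ {y ∈ Set.Ioo a b | α' y = 0} := ⟨hy, hy0⟩
      rw [hE] at this; exact this
    · obtain ⟨cc, hccIoo, _⟩ := Set.nonempty_iff_ne_empty.mpr hE
      have hac : a ≤ cc := le_of_lt hccIoo.1
      have hcb : cc ≤ b := le_of_lt hccIoo.2
      have hsub1 : Set.Icc a cc ⊆ Set.Icc a b := Set.Icc_subset_Icc le_rfl hcb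
      have hsub2 : Set.Icc cc b ⊆ Set.Icc a b := Set.Icc_subset_Icc hac le_rfl
      have hcrit : ∀ u v : ℝ, Set.Ioo u v ⊆ Set.Ioo a b → cc ∉ Set.Ioo u v →
          {y ∈ Set.Ioo u v | α' y = 0}.Finite ∧
          {y ∈ Set.Ioo u v | α' y = 0}.ncard ≤ n := by
        intro u v huv hcc
        have hss : {y ∈ Set.Ioo u v | α' y = 0}
            ⊆ {y ∈ Set.Ioo a b | α' y = 0} \ {cc} := by
          rintro y ⟨hy, hy0⟩
          exact ⟨⟨huv hy, hy0⟩, fun h => hcc (h ▸ hy)⟩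
        have hf := hfin.diff (t := {cc})
        refine ⟨hfin.subset (hss.trans Set.diff_subset), ?_⟩
        calc {y ∈ Set.Ioo u v | α' y = 0}.ncard
            ≤ ({y ∈ Set.Ioo a b | α' y = 0} \ {cc}).ncard := Set.ncard_le_ncard hss hf
          _ = {y ∈ Set.Ioo a b | α' y = 0}.ncard - 1 :=
              Set.ncard_diff_singleton_of_mem ⟨hccIoo, ‹α' cc = 0›⟩
          _ ≤ n := by omega
      obtain ⟨hfin1, hm1, hi1⟩ := ih a cc hac (fun y hy => hd y (hsub1 hy)) (hc.mono hsub1)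
        (hcrit a cc (Set.Ioo_subset_Ioo le_rfl hcb) (fun h => absurd h.2 (lt_irrefl cc))).1
        (hcrit a cc (Set.Ioo_subset_Ioo le_rfl hcb) (fun h => absurd h.2 (lt_irrefl cc))).2
      obtain ⟨hfin2, hm2, hi2⟩ := ih cc b hcb (fun y hy => hd y (hsub2 hy)) (hc.mono hsub2)
        (hcrit cc b (Set.Ioo_subset_Ioo hac le_rfl) (fun h => absurd h.1 (lt_irrefl cc))).1
        (hcrit cc b (Set.Ioo_subset_Ioo hac le_rfl) (fun h => absurd h.1 (lt_irrefl cc))).2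
      have hsplit : ∀ θ : ℝ, {y ∈ Set.Ioc a b | ∃ k : ℤ, α y = θ + 2*π*k}
          = {y ∈ Set.Ioc a cc | ∃ k : ℤ, α y = θ + 2*π*k}
            ∪ {y ∈ Set.Ioc cc b | ∃ k : ℤ, α y = θ + 2*π*k} := by
        intro θ
        rw [← Set.Ioc_union_Ioc_eq_Ioc hac hcb]
        ext y; simp only [Set.mem_setOf_eq, Set.mem_union, Set.mem_inter_iff]
        tauto
      have hdisj : ∀ θ : ℝ, Disjoint {y ∈ Set.Ioc a cc | ∃ k : ℤ, α y = θ + 2*π*k}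
          {y ∈ Set.Ioc cc b | ∃ k : ℤ, α y = θ + 2*π*k} := by
        intro θ
        refine Set.disjoint_left.mpr fun y hy1 hy2 => ?_
        exact absurd hy2.1.1 (not_lt.mpr hy1.1.2)
      have hcount : ∀ θ : ℝ,
          (({y ∈ Set.Ioc a b | ∃ k : ℤ, α y = θ + 2*π*k}).ncard : ℝ≥0∞)
          = (({y ∈ Set.Ioc a cc | ∃ k : ℤ, α y = θ + 2*π*k}).ncard : ℝ≥0∞)
            + (({y ∈ Set.Ioc cc b | ∃ k : ℤ, α y = θ + 2*π*k}).ncard : ℝ≥0∞) := by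
        intro θ
        rw [hsplit θ, Set.ncard_union_eq (hdisj θ) (hfin1 θ) (hfin2 θ)]
        push_cast; ring
      have hI1 : IntervalIntegrable (fun y => |α' y|) volume a cc := by
        apply ContinuousOn.intervalIntegrable
        rw [Set.uIcc_of_le hac]; exact (hc.mono hsub1).abs
      have hI2 : IntervalIntegrable (fun y => |α' y|) volume cc b := by
        apply ContinuousOn.intervalIntegrable
        rw [Set.uIcc_of_le hcb]; exact (hc.mono hsub2).abs
      refine ⟨fun θ => by rw [hsplit θ]; exact (hfin1 θ).union (hfin2 θ), ?_, ?_⟩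
      · have : (fun θ : ℝ =>
            (({y ∈ Set.Ioc a b | ∃ k : ℤ, α y = θ + 2*π*k}).ncard : ℝ≥0∞))
            = fun θ => (({y ∈ Set.Ioc a cc | ∃ k : ℤ, α y = θ + 2*π*k}).ncard : ℝ≥0∞)
              + (({y ∈ Set.Ioc cc b | ∃ k : ℤ, α y = θ + 2*π*k}).ncard : ℝ≥0∞) :=
          funext hcount
        rw [this]; exact hm1.add hm2
      · simp_rw [hcount]
        rw [lintegral_add_left hm1, hi1, hi2,
          ← ENNReal.ofReal_add (intervalIntegral.integral_nonneg hac fun y _ => abs_nonneg _)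
            (intervalIntegral.integral_nonneg hcb fun y _ => abs_nonneg _),
          intervalIntegral.integral_add_adjacent_intervals hI1 hI2]


/-- Banach-indicatrix formula for the (lifted) tangent angle `α` of a curve:
if `α` is continuously differentiable on `[0, L]` with finitely many critical points, then
`∫_0^{2π} N(θ) dθ = ∫_0^L |α'(y)| dy`, where `N(θ)` is the number of `y ∈ [0, L]` with
`α(y) ≡ θ (mod 2π)`. -/
theorem expected_marked_points_eq_total_absolute_curvature
    (L : ℝ) (hL : 0 < L) (α α' : ℝ → ℝ)
    (hderiv : ∀ y ∈ Set.Icc (0 : ℝ) L, HasDerivAt α (α' y) y)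
    (hcont : ContinuousOn α' (Set.Icc (0 : ℝ) L))
    (hfin : {y ∈ Set.Icc (0 : ℝ) L | α' y = 0}.Finite) :
    ∫ θ in (0 : ℝ)..(2 * Real.pi),
        ((Set.ncard {y ∈ Set.Icc (0 : ℝ) L |
          ∃ k : ℤ, α y = θ + 2 * Real.pi * (k : ℝ)} : ℕ) : ℝ)
      = ∫ y in (0 : ℝ)..L, |α' y| := by
  have hT : (0:ℝ) < 2*π := by positivity
  have hfinIoo : {y ∈ Set.Ioo (0:ℝ) L | α' y = 0}.Finite :=
    hfin.subset fun y hy => ⟨Set.Ioo_subset_Icc_self hy.1, hy.2⟩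
  obtain ⟨hfinθ, hm, hint⟩ := pieces α α' ({y ∈ Set.Ioo (0:ℝ) L | α' y = 0}.ncard)
    0 L hL.le hderiv hcont hfinIoo le_rfl
  set g : ℝ → ℝ≥0∞ := fun θ =>
    (({y ∈ Set.Ioc (0:ℝ) L | ∃ k : ℤ, α y = θ + 2*π*k}).ncard : ℝ≥0∞) with hg
  set C : Set ℝ := Set.range (fun k : ℤ => α 0 - 2*π*k) with hC
  have hCvol : volume C = 0 := (Set.countable_range _).measure_zero _
  have hCae : ∀ᵐ θ : ℝ ∂volume, θ ∉ C := by
    rw [MeasureTheory.ae_iff]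
    simpa using hCvol
  have hagree : ∀ θ : ℝ, θ ∉ C →
      {y ∈ Set.Icc (0:ℝ) L | ∃ k : ℤ, α y = θ + 2*π*k}
        = {y ∈ Set.Ioc (0:ℝ) L | ∃ k : ℤ, α y = θ + 2*π*k} := by
    intro θ hθ
    ext y
    simp only [Set.mem_setOf_eq, Set.mem_Icc, Set.mem_Ioc]
    constructor
    · rintro ⟨⟨h0, hyL⟩, k, hk⟩
      rcases eq_or_lt_of_le h0 with rfl | h0'
      · exfalso; apply hθ; rw [hC]; exact ⟨k, by simp only; linarith⟩
      · exact ⟨⟨h0', hyL⟩, k, hk⟩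
    · rintro ⟨⟨h0, hyL⟩, hk⟩
      exact ⟨⟨le_of_lt h0, hyL⟩, hk⟩
  rw [intervalIntegral.integral_of_le (le_of_lt hT)]
  have hfae : (fun θ : ℝ => ((Set.ncard {y ∈ Set.Icc (0 : ℝ) L |
        ∃ k : ℤ, α y = θ + 2 * Real.pi * (k : ℝ)} : ℕ) : ℝ))
      =ᵐ[volume.restrict (Set.Ioc (0:ℝ) (2*π))] fun θ => (g θ).toReal := by
    apply MeasureTheory.ae_restrict_of_ae
    filter_upwards [hCae] with θ hθ
    rw [hg]
    simp only
    rw [← hagree θ hθ, ENNReal.toReal_natCast]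
  have hmf : AEStronglyMeasurable (fun θ : ℝ => ((Set.ncard {y ∈ Set.Icc (0 : ℝ) L |
        ∃ k : ℤ, α y = θ + 2 * Real.pi * (k : ℝ)} : ℕ) : ℝ))
      (volume.restrict (Set.Ioc (0:ℝ) (2*π))) :=
    ((ENNReal.measurable_toReal.comp hm).aestronglyMeasurable).congr hfae.symm
  rw [MeasureTheory.integral_eq_lintegral_of_nonneg_ae
    (Filter.Eventually.of_forall fun θ => Nat.cast_nonneg _) hmf]
  have hlin : ∫⁻ θ in Set.Ioc (0:ℝ) (2*π),
      ENNReal.ofReal ((Set.ncard {y ∈ Set.Icc (0 : ℝ) L |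
        ∃ k : ℤ, α y = θ + 2 * Real.pi * (k : ℝ)} : ℕ) : ℝ)
      = ∫⁻ θ in Set.Ioc (0:ℝ) (2*π), g θ := by
    apply lintegral_congr_ae
    apply MeasureTheory.ae_restrict_of_ae
    filter_upwards [hCae] with θ hθ
    rw [ENNReal.ofReal_natCast, hg]
    simp only
    rw [← hagree θ hθ]
  rw [hlin, hint, ENNReal.toReal_ofReal
    (intervalIntegral.integral_nonneg hL.le fun y _ => abs_nonneg _)]
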